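/- Let B be a C*-algebra and ρ a state on B. Then the state-kernel J_{B,ρ} is a well-defined, norm-closed, hereditary C*-subalgebra of the sequence algebra B_∞: it is closed under addition, scalar multiplication, multiplication and adjoints, it is closed in norm, and whenever x ∈ J_{B,ρ} and y ∈ B_∞ satisfy 0 ≤ y ≤ x, then y ∈ J_{B,ρ}. -/

import Mathlib

/-!
STATEMENT 0: For a C*-algebra `B` and a state `ρ` on `B`, the state-kernel `J_{B,ρ}` is a
well-defined, norm-closed, hereditary C*-subalgebra of the sequence algebra `B_∞`.

`B_∞` is encoded abstractly: a C*-algebra `Binf` together with a surjective *-homomorphism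
`πB : ℓ∞(ℕ, B) → Binf` whose kernel is exactly the sequences tending to `0` in norm; this
characterizes `B_∞ = ℓ∞(ℕ, B)/c₀(ℕ, B)` up to isomorphism.  The canonical order on a
C*-algebra is encoded by the (uniquely determined) `StarOrderedRing` structure.
-/

open Filter Topology
open scoped ENNReal

noncomputable section

/-- The `ρ`-seminorm `‖b‖_ρ := √((ρ(b* b)).re)`. -/
def rhoNorm {B : Type*} [NonUnitalCStarAlgebra B] (ρ : B →L[ℂ] ℂ) (b : B) : ℝ :=
  Real.sqrt (ρ (star b * b)).re

/-- The `(ρ,#)`-seminorm `‖b‖_{ρ,#} := (‖b‖_ρ + ‖b*‖_ρ)/2`. -/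
def rhoSharp {B : Type*} [NonUnitalCStarAlgebra B] (ρ : B →L[ℂ] ℂ) (b : B) : ℝ :=
  (rhoNorm ρ b + rhoNorm ρ (star b)) / 2

/-- A state on a C*-algebra: a positive continuous linear functional of norm one. -/
def IsState {B : Type*} [NonUnitalCStarAlgebra B] (ρ : B →L[ℂ] ℂ) : Prop :=
  ‖ρ‖ = 1 ∧ ∀ b : B, 0 ≤ (ρ (star b * b)).re ∧ (ρ (star b * b)).im = 0


namespace StateAux

variable {B : Type*} [NonUnitalCStarAlgebra B] {ρ : B →L[ℂ] ℂ}

lemma expand (ρ : B →L[ℂ] ℂ) (w : ℂ) (x y : B) :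
    ρ (star (w • x + y) * (w • x + y)) =
      (starRingEnd ℂ w * w) * ρ (star x * x) + starRingEnd ℂ w * ρ (star x * y)
        + w * ρ (star y * x) + ρ (star y * y) := by
  have : star (w • x + y) * (w • x + y) =
      (starRingEnd ℂ w * w) • (star x * x) + starRingEnd ℂ w • (star x * y)
        + w • (star y * x) + star y * y := by
    simp only [star_add, star_smul, RingHom.coe_coe, Complex.star_def, mul_add, add_mul,
      smul_mul_assoc, mul_smul_comm, smul_smul, smul_add]
    rw [mul_comm w (starRingEnd ℂ w)]
    abel
  rw [this]
  simp [smul_eq_mul, mul_assoc]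

lemma herm (hρ : IsState ρ) (x y : B) :
    ρ (star y * x) = starRingEnd ℂ (ρ (star x * y)) := by
  set u := ρ (star x * y) with hu
  set v := ρ (star y * x) with hv
  have h1 : (u + v).im = 0 := by
    have e := expand ρ 1 x y
    simp only [one_smul, map_one, one_mul] at e
    have h := (hρ.2 (x + y)).2
    rw [e] at h
    simp only [Complex.add_im] at h
    have h2 := (hρ.2 x).2
    have h3 := (hρ.2 y).2
    simp only [← hu, ← hv] at h ⊢
    simp [Complex.add_im] at h ⊢
    linarith
  have h2 : (u - v).re = 0 := by
    have e := expand ρ Complex.I x y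
    have h := (hρ.2 (Complex.I • x + y)).2
    rw [e] at h
    have h2 := (hρ.2 x).2
    have h3 := (hρ.2 y).2
    simp only [Complex.conj_I] at h
    have : (-Complex.I * Complex.I) = 1 := by simp [Complex.I_mul_I]
    rw [this, one_mul] at h
    simp only [Complex.add_im, Complex.mul_im, Complex.neg_re, Complex.I_re, Complex.neg_im,
      Complex.I_im, h2, h3, ← hu, ← hv] at h ⊢
    simp only [Complex.sub_re]
    linarith
  have h1' : v.im = -u.im := by
    have := h1; simp only [Complex.add_im] at this; linarith
  have h2' : v.re = u.re := by
    have := h2; simp only [Complex.sub_re] at this; linarith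
  apply Complex.ext <;> simp [h1', h2']

lemma rhoNorm_nonneg (ρ : B →L[ℂ] ℂ) (b : B) : 0 ≤ rhoNorm ρ b := Real.sqrt_nonneg _

lemma rhoSharp_nonneg (ρ : B →L[ℂ] ℂ) (b : B) : 0 ≤ rhoSharp ρ b := by
  have := rhoNorm_nonneg ρ b; have := rhoNorm_nonneg ρ (star b)
  unfold rhoSharp; linarith

lemma sq_rhoNorm (hρ : IsState ρ) (b : B) : rhoNorm ρ b ^ 2 = (ρ (star b * b)).re := by
  rw [rhoNorm, Real.sq_sqrt (hρ.2 b).1]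

/-- Cauchy–Schwarz for the state `ρ`. -/
lemma cauchy_schwarz (hρ : IsState ρ) (x y : B) :
    ‖ρ (star x * y)‖ ≤ rhoNorm ρ x * rhoNorm ρ y := by
  set u := ρ (star x * y) with hu
  set A := (ρ (star x * x)).re with hA
  set C := (ρ (star y * y)).re with hC
  have hA0 : 0 ≤ A := (hρ.2 x).1
  have hC0 : 0 ≤ C := (hρ.2 y).1
  -- choose a phase
  obtain ⟨c, hc1, hc2⟩ : ∃ c : ℂ, ‖c‖ = 1 ∧
      starRingEnd ℂ c * u = (‖u‖ : ℂ) := by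
    rcases eq_or_ne u 0 with h | h
    · exact ⟨1, by simp, by simp [h]⟩
    · have hn : ‖u‖ ≠ 0 := norm_ne_zero_iff.mpr h
      refine ⟨u / (‖u‖ : ℂ), ?_, ?_⟩
      · rw [norm_div, Complex.norm_real, norm_norm, div_self hn]
      · rw [map_div₀]
        simp only [Complex.conj_ofReal]
        rw [div_mul_eq_mul_div, Complex.conj_mul']
        rw [← Complex.ofReal_pow, sq, ← Complex.ofReal_div,
          mul_div_assoc, div_self hn, mul_one]
  have key : ∀ t : ℝ, 0 ≤ A * (t * t) + (2 * ‖u‖) * t + C := by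
    intro t
    have h := (hρ.2 ((((t : ℂ) * c)) • x + y)).1
    rw [expand ρ ((t : ℂ) * c) x y] at h
    have e1 : starRingEnd ℂ ((t : ℂ) * c) * ((t : ℂ) * c) = ((t * t : ℝ) : ℂ) := by
      rw [Complex.conj_mul', norm_mul, hc1, mul_one, Complex.norm_real]
      rw [← Complex.ofReal_pow]
      norm_cast
      rw [Real.norm_eq_abs, sq_abs, sq]
    have e2 : starRingEnd ℂ ((t : ℂ) * c) * u = ((t * ‖u‖ : ℝ) : ℂ) := by
      rw [map_mul, Complex.conj_ofReal, mul_assoc, hc2]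
      push_cast; ring
    have e3 : ((t : ℂ) * c) * ρ (star y * x) = ((t * ‖u‖ : ℝ) : ℂ) := by
      rw [herm hρ x y, ← hu]
      calc ((t : ℂ) * c) * starRingEnd ℂ u
          = starRingEnd ℂ (starRingEnd ℂ ((t : ℂ) * c) * u) := by
            rw [map_mul, Complex.conj_conj]
        _ = ((t * ‖u‖ : ℝ) : ℂ) := by rw [e2, Complex.conj_ofReal]
    rw [e1, e2, e3] at h
    simp only [Complex.add_re, Complex.re_ofReal_mul, Complex.ofReal_re] at h
    calc (0:ℝ) ≤ (t * t) * A + t * ‖u‖ + t * ‖u‖ + C := h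
      _ = A * (t * t) + (2 * ‖u‖) * t + C := by ring
  have hdisc := discrim_le_zero key
  rw [discrim] at hdisc
  have habs : ‖u‖ ^ 2 ≤ A * C := by nlinarith
  calc ‖u‖ = Real.sqrt (‖u‖ ^ 2) := by
        rw [Real.sqrt_sq (norm_nonneg u)]
    _ ≤ Real.sqrt (A * C) := Real.sqrt_le_sqrt habs
    _ = rhoNorm ρ x * rhoNorm ρ y := by rw [Real.sqrt_mul hA0, rhoNorm, rhoNorm, ← hA, ← hC]

end StateAux

namespace StateAux

variable {B : Type*} [NonUnitalCStarAlgebra B] {ρ : B →L[ℂ] ℂ}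

lemma re_le_abs (z : ℂ) : z.re ≤ ‖z‖ := Complex.re_le_norm z

lemma abs_rho_le (hρ : IsState ρ) (b : B) : ‖ρ b‖ ≤ ‖b‖ := by
  have := ρ.le_opNorm b
  rw [hρ.1, one_mul] at this
  simpa using this

lemma rhoNorm_le_norm (hρ : IsState ρ) (b : B) : rhoNorm ρ b ≤ ‖b‖ := by
  have h1 : (ρ (star b * b)).re ≤ ‖b‖ * ‖b‖ := by
    calc (ρ (star b * b)).re ≤ ‖ρ (star b * b)‖ := re_le_abs _
      _ ≤ ‖star b * b‖ := abs_rho_le hρ _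
      _ = ‖b‖ * ‖b‖ := CStarRing.norm_star_mul_self
  calc rhoNorm ρ b = Real.sqrt (ρ (star b * b)).re := rfl
    _ ≤ Real.sqrt (‖b‖ * ‖b‖) := Real.sqrt_le_sqrt h1
    _ = ‖b‖ := Real.sqrt_mul_self (norm_nonneg b)

lemma rhoNorm_add_le (hρ : IsState ρ) (x y : B) :
    rhoNorm ρ (x + y) ≤ rhoNorm ρ x + rhoNorm ρ y := by
  have h := expand ρ 1 x y
  simp only [one_smul, map_one, one_mul] at h
  have hre : (ρ (star (x + y) * (x + y))).re ≤ (rhoNorm ρ x + rhoNorm ρ y) ^ 2 := by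
    rw [h]
    have hcs := cauchy_schwarz hρ x y
    have hcs' := cauchy_schwarz hρ y x
    have h1 : (ρ (star x * y)).re ≤ rhoNorm ρ x * rhoNorm ρ y :=
      (re_le_abs _).trans hcs
    have h2 : (ρ (star y * x)).re ≤ rhoNorm ρ y * rhoNorm ρ x :=
      (re_le_abs _).trans hcs'
    have e1 := sq_rhoNorm hρ x
    have e2 := sq_rhoNorm hρ y
    simp only [Complex.add_re]
    nlinarith [rhoNorm_nonneg ρ x, rhoNorm_nonneg ρ y]
  calc rhoNorm ρ (x + y) = Real.sqrt (ρ (star (x + y) * (x + y))).re := rfl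
    _ ≤ Real.sqrt ((rhoNorm ρ x + rhoNorm ρ y) ^ 2) := Real.sqrt_le_sqrt hre
    _ = rhoNorm ρ x + rhoNorm ρ y := by
        rw [Real.sqrt_sq (add_nonneg (rhoNorm_nonneg ρ x) (rhoNorm_nonneg ρ y))]

lemma rhoNorm_smul (ρ : B →L[ℂ] ℂ) (c : ℂ) (x : B) :
    rhoNorm ρ (c • x) = ‖c‖ * rhoNorm ρ x := by
  unfold rhoNorm
  have : star (c • x) * (c • x) = (starRingEnd ℂ c * c) • (star x * x) := by
    simp only [star_smul, Complex.star_def, smul_mul_assoc, mul_smul_comm, smul_smul]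
    rw [mul_comm]
  rw [this, map_smul, smul_eq_mul, Complex.conj_mul']
  rw [← Complex.ofReal_pow, Complex.re_ofReal_mul]
  rw [Real.sqrt_mul (by positivity)]
  rw [Real.sqrt_sq (norm_nonneg c)]

lemma rhoNorm_sub_le (hρ : IsState ρ) (x y : B) :
    rhoNorm ρ x - rhoNorm ρ y ≤ rhoNorm ρ (x - y) := by
  have := rhoNorm_add_le hρ (x - y) y
  rw [sub_add_cancel] at this
  linarith

lemma rhoSharp_star (ρ : B →L[ℂ] ℂ) (x : B) : rhoSharp ρ (star x) = rhoSharp ρ x := by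
  unfold rhoSharp
  rw [star_star]
  ring

lemma rhoSharp_add_le (hρ : IsState ρ) (x y : B) :
    rhoSharp ρ (x + y) ≤ rhoSharp ρ x + rhoSharp ρ y := by
  unfold rhoSharp
  rw [star_add]
  have := rhoNorm_add_le hρ x y
  have := rhoNorm_add_le hρ (star x) (star y)
  linarith

lemma rhoSharp_le_norm (hρ : IsState ρ) (x : B) : rhoSharp ρ x ≤ ‖x‖ := by
  unfold rhoSharp
  have h1 := rhoNorm_le_norm hρ x
  have h2 := rhoNorm_le_norm hρ (star x)
  rw [norm_star] at h2
  linarith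

lemma rhoSharp_sub_le (hρ : IsState ρ) (x y : B) :
    rhoSharp ρ x - rhoSharp ρ y ≤ ‖x - y‖ := by
  have h1 := rhoSharp_add_le hρ (x - y) y
  rw [sub_add_cancel] at h1
  have := rhoSharp_le_norm hρ (x - y)
  linarith

lemma rhoNorm_le_two_rhoSharp (ρ : B →L[ℂ] ℂ) (x : B) : rhoNorm ρ x ≤ 2 * rhoSharp ρ x := by
  have := rhoNorm_nonneg ρ (star x); unfold rhoSharp; linarith

lemma rhoNorm_star_le_two_rhoSharp (ρ : B →L[ℂ] ℂ) (x : B) :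
    rhoNorm ρ (star x) ≤ 2 * rhoSharp ρ x := by
  have := rhoNorm_nonneg ρ x; unfold rhoSharp; linarith

lemma rhoNorm_mul_le (hρ : IsState ρ) (a b : B) :
    rhoNorm ρ (a * b) ≤ Real.sqrt (‖a‖ ^ 2 * ‖b‖ * rhoNorm ρ b) := by
  have key : (ρ (star (a * b) * (a * b))).re ≤ ‖a‖ ^ 2 * ‖b‖ * rhoNorm ρ b := by
    have h1 : star (a * b) * (a * b) = star (star a * a * b) * b := by
      simp only [star_mul, star_star, mul_assoc]
    rw [h1]
    calc (ρ (star (star a * a * b) * b)).re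
        ≤ ‖ρ (star (star a * a * b) * b)‖ := re_le_abs _
      _ ≤ rhoNorm ρ (star a * a * b) * rhoNorm ρ b := cauchy_schwarz hρ _ b
      _ ≤ ‖star a * a * b‖ * rhoNorm ρ b := by
          gcongr
          exacts [rhoNorm_nonneg ρ b, rhoNorm_le_norm hρ _]
      _ ≤ (‖a‖ ^ 2 * ‖b‖) * rhoNorm ρ b := by
          gcongr
          · exact rhoNorm_nonneg ρ b
          · calc ‖star a * a * b‖ ≤ ‖star a * a‖ * ‖b‖ := norm_mul_le _ _
              _ ≤ (‖star a‖ * ‖a‖) * ‖b‖ := by gcongr; exact norm_mul_le _ _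
              _ = ‖a‖ ^ 2 * ‖b‖ := by rw [norm_star]; ring
  exact Real.sqrt_le_sqrt key

end StateAux

namespace StateAux

variable {B : Type*} [NonUnitalCStarAlgebra B] {ρ : B →L[ℂ] ℂ}

/-- If `x = star s * s + z` then `(ρ z).re ≤ (ρ x).re`. -/
lemma re_mono (hρ : IsState ρ) (s z : B) :
    (ρ z).re ≤ (ρ (star s * s + z)).re := by
  rw [map_add, Complex.add_re]
  have := (hρ.2 s).1
  linarith

/-- Key state inequality: for selfadjoint `a`, `ρ(a).re ≤ ρ(a²).re / ε + ε / 4`. -/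
lemma re_apply_le (hρ : IsState ρ) {a : B} (ha : IsSelfAdjoint a) {ε : ℝ} (hε : 0 < ε) :
    (ρ a).re ≤ (ρ (a * a)).re / ε + ε / 4 := by
  have hinv : ε * ε⁻¹ = 1 := mul_inv_cancel₀ (ne_of_gt hε)
  set k : ℝ → ℝ := fun t => t - ε⁻¹ * (t * t) with hk
  have hkc : Continuous k := by fun_prop
  have hk0 : k 0 = 0 := by simp [hk]
  set g : ℝ → ℝ := fun t => max (k t) 0 with hg
  have hgc : Continuous g := hkc.max continuous_const
  have hg0 : g 0 = 0 := by simp [hg, hk0]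
  have hgk : ∀ t, k t ≤ g t := fun t => le_max_left _ _
  have hg14 : ∀ t, g t ≤ ε / 4 := by
    intro t
    refine max_le ?_ (by positivity)
    show t - ε⁻¹ * (t * t) ≤ ε / 4
    nlinarith [sq_nonneg (t - ε / 2), sq_nonneg t, hε.le]
  -- decomposition a = ε⁻¹ • (a * a) + cfcₙ k a
  have hmul : cfcₙ (fun t : ℝ => t * t) a = a * a := by
    rw [cfcₙ_mul (fun t : ℝ => t) (fun t : ℝ => t) a, cfcₙ_id' ℝ a]
  have hcfk : cfcₙ k a = a - ε⁻¹ • (a * a) := by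
    rw [hk]
    rw [cfcₙ_sub (fun t : ℝ => t) (fun t : ℝ => ε⁻¹ * (t * t)) a]
    have : (fun t : ℝ => ε⁻¹ * (t * t)) = (fun t : ℝ => ε⁻¹ • (t * t)) := by
      funext t; rw [smul_eq_mul]
    rw [this, cfcₙ_smul ε⁻¹ (fun t : ℝ => t * t) a, hmul, cfcₙ_id' ℝ a]
  have hdecomp : a = ε⁻¹ • (a * a) + cfcₙ k a := by rw [hcfk]; abel
  -- real smul as complex smul
  have hsmul : (ε⁻¹ • (a * a) : B) = ((ε⁻¹ : ℝ) : ℂ) • (a * a) := by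
    rw [← algebraMap_smul ℂ (ε⁻¹ : ℝ) (a * a), Complex.coe_algebraMap]
  have hre : (ρ a).re = ε⁻¹ * (ρ (a * a)).re + (ρ (cfcₙ k a)).re := by
    conv_lhs => rw [hdecomp]
    rw [map_add, hsmul, map_smul, smul_eq_mul, Complex.add_re, Complex.re_ofReal_mul]
  -- bound the remainder
  set s := cfcₙ (fun t : ℝ => Real.sqrt (g t - k t)) a with hs_def
  have hsc : Continuous (fun t : ℝ => Real.sqrt (g t - k t)) :=
    Real.continuous_sqrt.comp (hgc.sub hkc)
  have hs0 : Real.sqrt (g 0 - k 0) = 0 := by rw [hg0, hk0]; simp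
  have hs : IsSelfAdjoint s := cfcₙ_predicate _ a
  have hss : star s * s + cfcₙ k a = cfcₙ g a := by
    rw [hs.star_eq, hs_def, ← cfcₙ_mul _ _ a (hf0 := hs0) (hg0 := hs0)]
    have : (fun t : ℝ => Real.sqrt (g t - k t) * Real.sqrt (g t - k t)) =
        fun t : ℝ => g t - k t := by
      funext t; exact Real.mul_self_sqrt (sub_nonneg.2 (hgk t))
    rw [this, cfcₙ_sub g k a (hf0 := hg0) (hg0 := hk0)]
    abel
  have hrem : (ρ (cfcₙ k a)).re ≤ ε / 4 := by
    calc (ρ (cfcₙ k a)).re ≤ (ρ (star s * s + cfcₙ k a)).re := re_mono hρ s _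
      _ = (ρ (cfcₙ g a)).re := by rw [hss]
      _ ≤ ‖ρ (cfcₙ g a)‖ := re_le_abs _
      _ ≤ ‖cfcₙ g a‖ := abs_rho_le hρ _
      _ ≤ ε / 4 := by
          refine norm_cfcₙ_le fun t ht => ?_
          rw [Real.norm_eq_abs, abs_of_nonneg (le_max_right _ _)]
          exact hg14 t
  rw [hre, div_eq_inv_mul]
  linarith

end StateAux

namespace StateAux

variable {B : Type*} [NonUnitalCStarAlgebra B]

/-- Evaluation at a coordinate, as a star algebra homomorphism. -/
def evalHom (n : ℕ) : lp (fun _ : ℕ => B) ∞ →⋆ₙₐ[ℂ] B where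
  toFun := fun f => f n
  map_smul' := fun c f => by simpa using congrFun (lp.coeFn_smul c f) n
  map_zero' := rfl
  map_add' := fun f g => by simpa using congrFun (lp.coeFn_add f g) n
  map_mul' := fun f g => by simpa using congrFun (lp.infty_coeFn_mul f g) n
  map_star' := fun f => by simpa using congrFun (lp.coeFn_star f) n

lemma evalHom_continuous (n : ℕ) : Continuous (evalHom (B := B) n) :=
  AddMonoidHomClass.continuous_of_bound (evalHom (B := B) n) 1
    (fun x => by simpa using (show ‖evalHom (B := B) n x‖ ≤ ‖x‖ from lp.norm_apply_le_norm ENNReal.top_ne_zero x n))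

variable {Binf : Type*} [NonUnitalCStarAlgebra Binf]

set_option maxHeartbeats 1000000 in
/-- Representatives of elements of small norm eventually have small norm. -/
lemma eventually_norm_lt (πB : lp (fun _ : ℕ => B) ∞ →⋆ₙₐ[ℂ] Binf)
    (hπker : ∀ x : lp (fun _ : ℕ => B) ∞,
      πB x = 0 ↔ Filter.Tendsto (fun n => ‖x n‖) Filter.atTop (nhds 0))
    (w : lp (fun _ : ℕ => B) ∞) {r : ℝ} (hr : ‖πB w‖ < r) :
    ∀ᶠ n in Filter.atTop, ‖w n‖ < r := by
  haveI : NonUnitalContinuousFunctionalCalculus ℝ (lp (fun _ : ℕ => B) ∞) IsSelfAdjoint :=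
    IsSelfAdjoint.instNonUnitalContinuousFunctionalCalculus
  have hπcont : Continuous πB :=
    AddMonoidHomClass.continuous_of_bound πB 1
      (by simpa using fun x => NonUnitalStarAlgHom.norm_apply_le πB x)
  have hr0 : 0 ≤ ‖πB w‖ := norm_nonneg _
  have hrpos : 0 < r := lt_of_le_of_lt hr0 hr
  set q : lp (fun _ : ℕ => B) ∞ := star w * w with hq_def
  have hq : IsSelfAdjoint q := IsSelfAdjoint.star_mul_self w
  set c : ℝ := ‖πB q‖ with hc_def
  have hc0 : 0 ≤ c := norm_nonneg _
  have hc : c < r * r := by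
    have : c = ‖πB w‖ * ‖πB w‖ := by
      rw [hc_def, hq_def, map_mul, map_star, CStarRing.norm_star_mul_self]
    rw [this]
    nlinarith
  set g : ℝ → ℝ := fun t => max (|t| - c) 0 with hg_def
  have hgc : Continuous g := by fun_prop
  have hg0 : g 0 = 0 := by
    simp only [hg_def, abs_zero, zero_sub]
    exact max_eq_right (neg_nonpos.2 hc0)
  have h1 : πB (cfcₙ g q) = cfcₙ g (πB q) :=
    NonUnitalStarAlgHomClass.map_cfcₙ πB g q hgc.continuousOn hg0 hπcont hq (hq.map πB)
  have h2 : cfcₙ g (πB q) = 0 := by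
    have heq : (quasispectrum ℝ (πB q)).EqOn g (fun _ => 0) := by
      intro t ht
      have habs : ‖(id t : ℝ)‖ ≤ ‖cfcₙ (id : ℝ → ℝ) (πB q)‖ :=
        norm_apply_le_norm_cfcₙ id (πB q) ht continuousOn_id rfl (hq.map πB)
      rw [cfcₙ_id ℝ (πB q) (hq.map πB), Real.norm_eq_abs] at habs
      exact max_eq_right (sub_nonpos.2 habs)
    rw [cfcₙ_congr heq]
    exact cfcₙ_const_zero ℝ (πB q)
  have h3 : Filter.Tendsto (fun n => ‖(cfcₙ g q) n‖) Filter.atTop (nhds 0) :=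
    (hπker _).1 (h1.trans h2)
  have h4 : ∀ n, (cfcₙ g q) n = cfcₙ g (q n) := fun n =>
    NonUnitalStarAlgHomClass.map_cfcₙ (evalHom n) g q hgc.continuousOn hg0
      (evalHom_continuous n) hq (hq.map (evalHom n))
  simp only [h4] at h3
  have hqn_sa : ∀ n, IsSelfAdjoint (q n) := fun n => hq.map (evalHom n)
  have h5 : ∀ n, ‖q n‖ ≤ c + ‖cfcₙ g (q n)‖ := by
    intro n
    conv_lhs => rw [← cfcₙ_id ℝ (q n) (hqn_sa n)]
    refine norm_cfcₙ_le fun t ht => ?_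
    have hgt : ‖g t‖ ≤ ‖cfcₙ g (q n)‖ :=
      norm_apply_le_norm_cfcₙ g (q n) ht hgc.continuousOn hg0 (hqn_sa n)
    rw [Real.norm_eq_abs, abs_of_nonneg (le_max_right _ _)] at hgt
    rw [Real.norm_eq_abs, id_eq]
    have hmax := le_max_left (|t| - c) 0
    calc |t| ≤ c + g t := by rw [hg_def]; simpa using by linarith
      _ ≤ c + ‖cfcₙ g (q n)‖ := by linarith
  have h6 : ∀ᶠ n in Filter.atTop, ‖cfcₙ g (q n)‖ < r * r - c :=
    h3.eventually (gt_mem_nhds (show (0:ℝ) < r * r - c by linarith))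
  filter_upwards [h6] with n hn
  have hq_lt : ‖q n‖ < r * r := by have := h5 n; linarith
  have hqn : ‖q n‖ = ‖w n‖ * ‖w n‖ := by
    have e1 : q n = star (w n) * w n := by
      rw [hq_def]
      have := congrFun (lp.infty_coeFn_mul (star w) w) n
      rw [Pi.mul_apply] at this
      rw [this]
      have := congrFun (lp.coeFn_star w) n
      rw [Pi.star_apply] at this
      rw [this]
    rw [e1, CStarRing.norm_star_mul_self]
  rw [hqn] at hq_lt
  nlinarith [norm_nonneg (w n)]

end StateAux

namespace StateAux

variable {B : Type*} [NonUnitalCStarAlgebra B] {ρ : B →L[ℂ] ℂ}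

lemma rhoSharp_smul (ρ : B →L[ℂ] ℂ) (c : ℂ) (x : B) :
    rhoSharp ρ (c • x) = ‖c‖ * rhoSharp ρ x := by
  unfold rhoSharp
  rw [star_smul, Complex.star_def, rhoNorm_smul, rhoNorm_smul]
  rw [RCLike.norm_conj]
  ring

end StateAux

set_option maxHeartbeats 3000000 in
open StateAux in
theorem statement0
    {B : Type*} [NonUnitalCStarAlgebra B] (ρ : B →L[ℂ] ℂ) (hρ : IsState ρ)
    -- the sequence algebra `B_∞ = ℓ∞(ℕ, B)/c₀(ℕ, B)`, encoded abstractly: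
    {Binf : Type*} [NonUnitalCStarAlgebra Binf] [PartialOrder Binf] [StarOrderedRing Binf]
    (πB : lp (fun _ : ℕ => B) ∞ →⋆ₙₐ[ℂ] Binf)
    (hπsurj : Function.Surjective πB)
    (hπker : ∀ x : lp (fun _ : ℕ => B) ∞,
      πB x = 0 ↔ Tendsto (fun n => ‖x n‖) atTop (𝓝 0)) :
    -- the state-kernel `J_{B,ρ}`
    let J : Set Binf := {z | ∃ x : lp (fun _ : ℕ => B) ∞,
      πB x = z ∧ Tendsto (fun n => rhoSharp ρ (x n)) atTop (𝓝 0)}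
    -- well-definedness: membership is independent of the choice of representative
    (∀ x : lp (fun _ : ℕ => B) ∞,
        πB x ∈ J ↔ Tendsto (fun n => rhoSharp ρ (x n)) atTop (𝓝 0)) ∧
    -- closed under addition
    (∀ z w : Binf, z ∈ J → w ∈ J → z + w ∈ J) ∧
    -- closed under scalar multiplication
    (∀ (c : ℂ) (z : Binf), z ∈ J → c • z ∈ J) ∧
    -- closed under multiplication
    (∀ z w : Binf, z ∈ J → w ∈ J → z * w ∈ J) ∧
    -- closed under adjoints
    (∀ z : Binf, z ∈ J → star z ∈ J) ∧
    -- norm-closed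
    IsClosed J ∧
    -- hereditary
    (∀ x y : Binf, x ∈ J → 0 ≤ y → y ≤ x → y ∈ J) := by
  intro J
  have transfer : ∀ x y : lp (fun _ : ℕ => B) ∞, πB x = πB y →
      Tendsto (fun n => rhoSharp ρ (y n)) atTop (𝓝 0) →
      Tendsto (fun n => rhoSharp ρ (x n)) atTop (𝓝 0) := by
    intro x y hxy hy
    have h0 : πB (x - y) = 0 := by rw [map_sub, hxy, sub_self]
    have hn : Tendsto (fun n => ‖(x - y) n‖) atTop (𝓝 0) := (hπker _).1 h0
    have hsub : ∀ n, (x - y) n = x n - y n := fun n => by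
      simpa using congrFun (lp.coeFn_sub x y) n
    refine squeeze_zero (fun n => rhoSharp_nonneg ρ _) (fun n => ?_)
      (by simpa using hy.add hn)
    have h1 := rhoSharp_sub_le hρ (x n) (y n)
    linarith
  refine ⟨?_, ?_, ?_, ?_, ?_, ?_, ?_⟩
  · -- well-definedness
    intro x
    constructor
    · rintro ⟨y, hy, hty⟩
      exact transfer x y hy.symm hty
    · intro h
      exact ⟨x, rfl, h⟩
  · -- addition
    rintro z w ⟨x, hx, hxt⟩ ⟨y, hy, hyt⟩
    refine ⟨x + y, by rw [map_add, hx, hy], ?_⟩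
    have hadd : ∀ n, (x + y) n = x n + y n := fun n => by
      simpa using congrFun (lp.coeFn_add x y) n
    refine squeeze_zero (fun n => rhoSharp_nonneg ρ _) (fun n => ?_)
      (by simpa using hxt.add hyt)
    rw [hadd n]
    exact rhoSharp_add_le hρ _ _
  · -- scalar multiplication
    rintro c z ⟨x, hx, hxt⟩
    refine ⟨c • x, by rw [map_smul, hx], ?_⟩
    have hs : ∀ n, rhoSharp ρ ((c • x) n) = ‖c‖ * rhoSharp ρ (x n) := fun n => by
      have h1 : (c • x) n = c • x n := by simpa using congrFun (lp.coeFn_smul c x) n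
      rw [h1, rhoSharp_smul]
    simp only [hs]
    simpa using hxt.const_mul ‖c‖
  · -- multiplication
    rintro z w ⟨x, hx, hxt⟩ ⟨y, hy, hyt⟩
    refine ⟨x * y, by rw [map_mul, hx, hy], ?_⟩
    have hm : ∀ n, (x * y) n = x n * y n := fun n => by
      simpa using congrFun (lp.infty_coeFn_mul x y) n
    have hbx : ∀ n, ‖x n‖ ≤ ‖x‖ := fun n => lp.norm_apply_le_norm ENNReal.top_ne_zero x n
    have hby : ∀ n, ‖y n‖ ≤ ‖y‖ := fun n => lp.norm_apply_le_norm ENNReal.top_ne_zero y n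
    have hry : Tendsto (fun n => rhoNorm ρ (y n)) atTop (𝓝 0) :=
      squeeze_zero (fun n => rhoNorm_nonneg ρ _)
        (fun n => rhoNorm_le_two_rhoSharp ρ _) (by simpa using hyt.const_mul 2)
    have hrx : Tendsto (fun n => rhoNorm ρ (star (x n))) atTop (𝓝 0) :=
      squeeze_zero (fun n => rhoNorm_nonneg ρ _)
        (fun n => rhoNorm_star_le_two_rhoSharp ρ _) (by simpa using hxt.const_mul 2)
    have hlim : Tendsto (fun n =>
        (Real.sqrt (‖x‖ ^ 2 * ‖y‖ * rhoNorm ρ (y n)) +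
          Real.sqrt (‖y‖ ^ 2 * ‖x‖ * rhoNorm ρ (star (x n)))) / 2) atTop (𝓝 0) := by
      have := (((hry.const_mul (‖x‖ ^ 2 * ‖y‖)).sqrt).add
        ((hrx.const_mul (‖y‖ ^ 2 * ‖x‖)).sqrt)).div_const 2
      simpa using this
    refine squeeze_zero (fun n => rhoSharp_nonneg ρ _) (fun n => ?_) hlim
    rw [hm n]
    have h1 : rhoNorm ρ (x n * y n) ≤ Real.sqrt (‖x‖ ^ 2 * ‖y‖ * rhoNorm ρ (y n)) := by
      refine (rhoNorm_mul_le hρ _ _).trans (Real.sqrt_le_sqrt ?_)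
      gcongr
      exacts [rhoNorm_nonneg ρ _, hbx n, hby n]
    have h2 : rhoNorm ρ (star (x n * y n)) ≤
        Real.sqrt (‖y‖ ^ 2 * ‖x‖ * rhoNorm ρ (star (x n))) := by
      rw [star_mul]
      refine (rhoNorm_mul_le hρ _ _).trans (Real.sqrt_le_sqrt ?_)
      rw [norm_star, norm_star]
      gcongr
      exacts [rhoNorm_nonneg ρ _, hby n, hbx n]
    unfold rhoSharp
    have := Real.sqrt_nonneg (‖x‖ ^ 2 * ‖y‖ * rhoNorm ρ (y n))
    linarith
  · -- star
    rintro z ⟨x, hx, hxt⟩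
    refine ⟨star x, by rw [map_star, hx], ?_⟩
    have hs : ∀ n, rhoSharp ρ ((star x) n) = rhoSharp ρ (x n) := fun n => by
      have h1 : (star x) n = star (x n) := by simpa using congrFun (lp.coeFn_star x) n
      rw [h1, rhoSharp_star]
    simpa only [hs] using hxt
  · -- norm-closed
    refine isClosed_of_closure_subset fun z hz => ?_
    obtain ⟨x, hx⟩ := hπsurj z
    refine ⟨x, hx, ?_⟩
    rw [NormedAddCommGroup.tendsto_nhds_zero]
    intro ε hε
    obtain ⟨z', hz'J, hdist⟩ := Metric.mem_closure_iff.1 hz (ε / 2) (by linarith)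
    obtain ⟨y, hy, hyt⟩ := hz'J
    have hw : ‖πB (x - y)‖ < ε / 2 := by
      rw [map_sub, hx, hy, ← dist_eq_norm]
      exact hdist
    have h1 := eventually_norm_lt πB hπker (x - y) hw
    have h2 : ∀ᶠ n in atTop, rhoSharp ρ (y n) < ε / 2 :=
      hyt.eventually (gt_mem_nhds (by linarith))
    filter_upwards [h1, h2] with n hn1 hn2
    have hsub : (x - y) n = x n - y n := by simpa using congrFun (lp.coeFn_sub x y) n
    have h3 := rhoSharp_sub_le hρ (x n) (y n)
    rw [hsub] at hn1
    rw [Real.norm_eq_abs, abs_of_nonneg (rhoSharp_nonneg ρ _)]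
    linarith
  · -- hereditary
    rintro X Y ⟨a, ha, hat⟩ hY0 hYX
    have hD0 : (0 : Binf) ≤ X - Y := sub_nonneg.2 hYX
    have hsY : CFC.sqrt Y * CFC.sqrt Y = Y := CFC.sqrt_mul_sqrt_self Y hY0
    have hsD : CFC.sqrt (X - Y) * CFC.sqrt (X - Y) = X - Y := CFC.sqrt_mul_sqrt_self _ hD0
    have hsYsa : IsSelfAdjoint (CFC.sqrt Y) := IsSelfAdjoint.of_nonneg (CFC.sqrt_nonneg Y)
    have hsDsa : IsSelfAdjoint (CFC.sqrt (X - Y)) := IsSelfAdjoint.of_nonneg (CFC.sqrt_nonneg (X - Y))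
    obtain ⟨c, hc⟩ := hπsurj (CFC.sqrt Y)
    obtain ⟨d, hd⟩ := hπsurj (CFC.sqrt (X - Y))
    set b : lp (fun _ : ℕ => B) ∞ := star c * c with hb_def
    set a' : lp (fun _ : ℕ => B) ∞ := star c * c + star d * d with ha'_def
    have hπb : πB b = Y := by
      rw [hb_def, map_mul, map_star, hc, hsYsa.star_eq, hsY]
    have hπa' : πB a' = X := by
      rw [ha'_def, map_add, map_mul, map_star, map_mul, map_star, hc, hd,
        hsYsa.star_eq, hsDsa.star_eq, hsY, hsD]
      abel
    have hat' : Tendsto (fun n => rhoSharp ρ (a' n)) atTop (𝓝 0) :=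
      transfer a' a (by rw [hπa', ha]) hat
    -- coordinates
    have hbn : ∀ n, b n = star (c n) * c n := fun n => by
      rw [hb_def]
      have h1 := congrFun (lp.infty_coeFn_mul (star c) c) n
      rw [Pi.mul_apply] at h1
      have h2 := congrFun (lp.coeFn_star c) n
      rw [Pi.star_apply] at h2
      rw [h1, h2]
    have ha'n : ∀ n, a' n = star (c n) * c n + star (d n) * d n := fun n => by
      rw [ha'_def]
      have h1 := congrFun (lp.coeFn_add (star c * c) (star d * d)) n
      rw [Pi.add_apply] at h1
      have h2 := congrFun (lp.infty_coeFn_mul (star d) d) n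
      rw [Pi.mul_apply] at h2
      have h3 := congrFun (lp.coeFn_star d) n
      rw [Pi.star_apply] at h3
      rw [h1, ← hb_def, hbn n, h2, h3]
    have hbsa : ∀ n, star (b n) = b n := fun n => by
      rw [hbn n, star_mul, star_star]
    have ha'sa : ∀ n, IsSelfAdjoint (a' n) := fun n => by
      rw [IsSelfAdjoint, ha'n n, star_add, star_mul, star_mul, star_star, star_star]
    -- Step A : (ρ (a' n)).re → 0
    have hA : Tendsto (fun n => (ρ (a' n)).re) atTop (𝓝 0) := by
      rw [NormedAddCommGroup.tendsto_nhds_zero]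
      intro δ hδ
      have hev : ∀ᶠ n in atTop, rhoSharp ρ (a' n) < δ :=
        hat'.eventually (gt_mem_nhds hδ)
      filter_upwards [hev] with n hn
      have hnn : 0 ≤ (ρ (a' n)).re := by
        rw [ha'n n]
        rw [map_add, Complex.add_re]
        have := (hρ.2 (c n)).1
        have := (hρ.2 (d n)).1
        linarith
      rw [Real.norm_eq_abs, abs_of_nonneg hnn]
      have hkey := re_apply_le hρ (ha'sa n) (show (0:ℝ) < 2 * δ by linarith)
      have hsq : (ρ (a' n * a' n)).re = rhoSharp ρ (a' n) ^ 2 := by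
        have hrn : rhoSharp ρ (a' n) = rhoNorm ρ (a' n) := by
          unfold rhoSharp
          rw [(ha'sa n).star_eq]
          ring
        rw [hrn, sq_rhoNorm hρ, (ha'sa n).star_eq]
      rw [hsq] at hkey
      have hsh : 0 ≤ rhoSharp ρ (a' n) := rhoSharp_nonneg ρ _
      have h1 : rhoSharp ρ (a' n) ^ 2 / (2 * δ) < δ / 2 := by
        rw [div_lt_iff₀ (by linarith)]
        nlinarith
      linarith
    -- Step B : (ρ (b n)).re → 0
    have hB : Tendsto (fun n => (ρ (b n)).re) atTop (𝓝 0) := by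
      refine squeeze_zero (fun n => ?_) (fun n => ?_) hA
      · rw [hbn n]; exact (hρ.2 (c n)).1
      · have h1 : a' n = star (d n) * d n + b n := by
          rw [ha'n n, ← hbn n]; abel
        have h2 := re_mono hρ (d n) (b n)
        rw [← h1] at h2
        exact h2
    -- Step C : (ρ (star (b n) * b n)).re → 0
    have hKc : ∀ n, ‖c n‖ ≤ ‖c‖ := fun n => lp.norm_apply_le_norm ENNReal.top_ne_zero c n
    have hC : Tendsto (fun n => (ρ (star (b n) * b n)).re) atTop (𝓝 0) := by
      have hlim : Tendsto (fun n => Real.sqrt ((ρ (b n)).re) * (‖c‖ * ‖c‖ * ‖c‖))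
          atTop (𝓝 0) := by
        simpa using hB.sqrt.mul_const (‖c‖ * ‖c‖ * ‖c‖)
      refine squeeze_zero (fun n => (hρ.2 (b n)).1) (fun n => ?_) hlim
      have hfac : star (b n) * b n = star (c n) * (c n * (star (c n) * c n)) := by
        rw [hbsa n, hbn n]
        simp only [mul_assoc]
      rw [hfac]
      have hcs := cauchy_schwarz hρ (c n) (c n * (star (c n) * c n))
      have hre := re_le_abs (ρ (star (c n) * (c n * (star (c n) * c n))))
      have hb1 : rhoNorm ρ (c n * (star (c n) * c n)) ≤ ‖c‖ * ‖c‖ * ‖c‖ := by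
        refine (rhoNorm_le_norm hρ _).trans ?_
        calc ‖c n * (star (c n) * c n)‖ ≤ ‖c n‖ * ‖star (c n) * c n‖ := norm_mul_le _ _
          _ ≤ ‖c n‖ * (‖star (c n)‖ * ‖c n‖) := by
              gcongr; exact norm_mul_le _ _
          _ = ‖c n‖ * ‖c n‖ * ‖c n‖ := by rw [norm_star]; ring
          _ ≤ ‖c‖ * ‖c‖ * ‖c‖ := by
              have h0 := norm_nonneg (c n)
              have h1 := hKc n
              have h2 := (norm_nonneg (c n)).trans h1
              exact mul_le_mul (mul_le_mul h1 h1 h0 h2) h1 h0 (mul_nonneg h2 h2)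
      have hn1 : rhoNorm ρ (c n) = Real.sqrt ((ρ (b n)).re) := by
        rw [rhoNorm, hbn n]
      calc (ρ (star (c n) * (c n * (star (c n) * c n)))).re
          ≤ rhoNorm ρ (c n) * rhoNorm ρ (c n * (star (c n) * c n)) := hre.trans hcs
        _ ≤ Real.sqrt ((ρ (b n)).re) * (‖c‖ * ‖c‖ * ‖c‖) := by
            rw [hn1]
            gcongr
    -- Step D : conclude
    refine ⟨b, hπb, ?_⟩
    have hD : ∀ n, rhoSharp ρ (b n) = Real.sqrt ((ρ (star (b n) * b n)).re) := fun n => by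
      have h1 : rhoSharp ρ (b n) = rhoNorm ρ (b n) := by
        unfold rhoSharp
        rw [hbsa n]
        ring
      rw [h1]
      rfl
    simp only [hD]
    simpa using hC.sqrt
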